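/- (Section 5: the middle convolution via the middle Laplace transform agrees with Dettweiler–Reiter's) Assume β ≠ 0. Then: (a) each C_i maps K into K and K_∞ into K_∞ (hence C_i maps K + K_∞ into itself); (b) for every v ∈ (ℂ^N)^q one has (A + β·id)v ∈ K if and only if v ∈ K + K_∞; consequently the kernel of the endomorphism of (ℂ^N)^q/K induced by A + β·id equals the image of K_∞ under the quotient map (ℂ^N)^q → (ℂ^N)^q/K; and (c) there is a linear isomorphism Θ : ((ℂ^N)^q/K)/ker(\overline{A + β}) → (ℂ^N)^q/(K + K_∞) such that Θ sends the class of v (taken modulo K and then modulo ker(\overline{A + β})) to the class of v modulo K + K_∞, and for each i = 1, …, q, Θ intertwines the endomorphism induced by C_i on the source with the endomorphism induced by C_i on the target. -/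

import Mathlib

open Matrix

/-- Section 5.  The middle convolution via the middle Laplace
transform agrees with Dettweiler–Reiter's: for `β ≠ 0`, (a) each `C_i` preserves `K`,
`K_∞` and `K + K_∞`; (b) `(A + β)v ∈ K ↔ v ∈ K + K_∞`, so the kernel of the
endomorphism induced by `A + β` on `(ℂ^N)^q/K` is the image of `K_∞`; (c) there is a
linear isomorphism `Θ : ((ℂ^N)^q/K)/ker(A+β)‾ → (ℂ^N)^q/(K + K_∞)` compatible with the
quotient maps and intertwining the endomorphisms induced by each `C_i`. -/
theorem middle_convolution_agrees_with_DR
    (N q : ℕ) (hN : 1 ≤ N) (hq : 1 ≤ q)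
    (A : Fin q → Matrix (Fin N) (Fin N) ℂ) (β : ℂ) (hβ : β ≠ 0)
    (Acal : (Fin q → Fin N → ℂ) →ₗ[ℂ] (Fin q → Fin N → ℂ))
    (hAcal : ∀ v i, Acal v i = ∑ k, (A k) *ᵥ v k)
    (eps : Fin q → ((Fin q → Fin N → ℂ) →ₗ[ℂ] (Fin q → Fin N → ℂ)))
    (heps : ∀ i v m, eps i v m = if m = i then v i else 0)
    (C : Fin q → ((Fin q → Fin N → ℂ) →ₗ[ℂ] (Fin q → Fin N → ℂ)))
    (hC : ∀ i, C i = (eps i) ∘ₗ (Acal + β • LinearMap.id))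
    (K : Submodule ℂ (Fin q → Fin N → ℂ))
    (hK : ∀ v, v ∈ K ↔ ∀ i, (A i) *ᵥ v i = 0)
    (Kinf : Submodule ℂ (Fin q → Fin N → ℂ))
    (hKinf : Kinf = LinearMap.ker (Acal + β • LinearMap.id))
    (Abar : ((Fin q → Fin N → ℂ) ⧸ K) →ₗ[ℂ] ((Fin q → Fin N → ℂ) ⧸ K))
    (hAbar : ∀ v, Abar (K.mkQ v) = K.mkQ (Acal v + β • v)) :
    (∀ i, (∀ v ∈ K, C i v ∈ K) ∧ (∀ v ∈ Kinf, C i v ∈ Kinf) ∧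
      (∀ v ∈ K ⊔ Kinf, C i v ∈ K ⊔ Kinf)) ∧
    (∀ v, Acal v + β • v ∈ K ↔ v ∈ K ⊔ Kinf) ∧
    (LinearMap.ker Abar = Submodule.map K.mkQ Kinf) ∧
    (∃ Θ : (((Fin q → Fin N → ℂ) ⧸ K) ⧸ LinearMap.ker Abar) ≃ₗ[ℂ]
        ((Fin q → Fin N → ℂ) ⧸ (K ⊔ Kinf)),
      (∀ v, Θ ((LinearMap.ker Abar).mkQ (K.mkQ v)) = (K ⊔ Kinf).mkQ v) ∧
      (∀ i,
        ∀ (C1 : (((Fin q → Fin N → ℂ) ⧸ K) ⧸ LinearMap.ker Abar) →ₗ[ℂ]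
            (((Fin q → Fin N → ℂ) ⧸ K) ⧸ LinearMap.ker Abar)),
          (∀ v, C1 ((LinearMap.ker Abar).mkQ (K.mkQ v)) =
            (LinearMap.ker Abar).mkQ (K.mkQ (C i v))) →
        ∀ (C2 : ((Fin q → Fin N → ℂ) ⧸ (K ⊔ Kinf)) →ₗ[ℂ]
            ((Fin q → Fin N → ℂ) ⧸ (K ⊔ Kinf))),
          (∀ v, C2 ((K ⊔ Kinf).mkQ v) = (K ⊔ Kinf).mkQ (C i v)) →
        ∀ w, Θ (C1 w) = C2 (Θ w))) := by
  -- value of C i v at component m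
  have hCval : ∀ i v m, C i v m = if m = i then Acal v i + β • v i else 0 := by
    intro i v m
    rw [hC i]
    simp only [LinearMap.comp_apply, heps, LinearMap.add_apply, LinearMap.smul_apply,
      LinearMap.id_apply]
    rfl
  -- Kinf membership unfolded
  have hKinfMem : ∀ v, v ∈ Kinf ↔ Acal v + β • v = 0 := by
    intro v
    rw [hKinf, LinearMap.mem_ker]
    constructor <;> intro h <;> simpa using h
  -- (a)
  have haK : ∀ i, ∀ v ∈ K, C i v ∈ K := by
    intro i v hv
    have hAc : Acal v i = 0 := by
      rw [hAcal]
      exact Finset.sum_eq_zero fun k _ => (hK v).mp hv k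
    rw [hK]
    intro m
    have : C i v m = if m = i then β • v i else 0 := by
      rw [hCval, hAc]; simp
    rw [this]
    by_cases hm : m = i
    · subst hm
      rw [if_pos rfl, mulVec_smul, (hK v).mp hv m, smul_zero]
    · rw [if_neg hm, mulVec_zero]
  have haKinf : ∀ i, ∀ v ∈ Kinf, C i v ∈ Kinf := by
    intro i v hv
    have h0 : Acal v + β • v = 0 := (hKinfMem v).mp hv
    have : C i v = 0 := by
      funext m
      rw [hCval]
      have : Acal v i + β • v i = 0 := by
        have := congrFun h0 i; simpa using this
      simp [this]
    rw [this]
    exact Kinf.zero_mem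
  have haSup : ∀ i, ∀ v ∈ K ⊔ Kinf, C i v ∈ K ⊔ Kinf := by
    intro i v hv
    obtain ⟨k, hk, w, hw, rfl⟩ := Submodule.mem_sup.mp hv
    rw [map_add]
    exact Submodule.add_mem_sup (haK i k hk) (haKinf i w hw)
  -- (b)
  have hb : ∀ v, Acal v + β • v ∈ K ↔ v ∈ K ⊔ Kinf := by
    intro v
    constructor
    · intro h
      have h' : ∀ i, A i *ᵥ (Acal v i + β • v i) = 0 := by
        intro i
        have := (hK _).mp h i
        simpa using this
      -- the "constant" value
      set s : Fin N → ℂ := ∑ k, (A k) *ᵥ v k with hs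
      have hAcs : ∀ i, Acal v i = s := fun i => hAcal v i
      -- key summed identity: ∑ A i *ᵥ s = -β • s
      have hsum : (∑ i, A i *ᵥ s) = -(β • s) := by
        have h2 : ∀ i, A i *ᵥ s = -(β • (A i *ᵥ v i)) := by
          intro i
          have := h' i
          rw [hAcs i] at this
          rw [mulVec_add, mulVec_smul] at this
          linear_combination (norm := module) this
        calc (∑ i, A i *ᵥ s) = ∑ i, -(β • (A i *ᵥ v i)) :=
              Finset.sum_congr rfl fun i _ => h2 i
          _ = -(β • ∑ i, A i *ᵥ v i) := by
              rw [Finset.sum_neg_distrib, Finset.smul_sum]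
          _ = -(β • s) := by rw [hs]
      set k : Fin q → Fin N → ℂ := fun i => v i + β⁻¹ • s with hkdef
      set w : Fin q → Fin N → ℂ := fun _ => -(β⁻¹ • s) with hwdef
      have hkK : k ∈ K := by
        rw [hK]
        intro i
        have h2 : A i *ᵥ Acal v i = -(β • (A i *ᵥ v i)) := by
          have := h' i
          rw [mulVec_add, mulVec_smul] at this
          linear_combination (norm := module) this
        rw [hkdef]
        simp only
        rw [mulVec_add, mulVec_smul, ← hAcs i, h2]
        rw [smul_neg, smul_smul, inv_mul_cancel₀ hβ, one_smul]
        abel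
      have hwKinf : w ∈ Kinf := by
        rw [hKinfMem]
        funext i
        have : Acal w i = ∑ m, A m *ᵥ w m := hAcal w i
        simp only [Pi.add_apply, Pi.smul_apply, this, hwdef, hAcal]
        have : (∑ m, A m *ᵥ (-(β⁻¹ • s))) = -(β⁻¹ • ∑ m, A m *ᵥ s) := by
          calc (∑ m, A m *ᵥ (-(β⁻¹ • s))) = ∑ m, -(β⁻¹ • (A m *ᵥ s)) :=
                Finset.sum_congr rfl fun m _ => by rw [mulVec_neg, mulVec_smul]
            _ = -(β⁻¹ • ∑ m, A m *ᵥ s) := by rw [Finset.sum_neg_distrib, Finset.smul_sum]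
        rw [this, hsum]
        show _ = (0 : Fin N → ℂ)
        match_scalars
        field_simp
        ring
      have hv : v = k + w := by
        funext i
        simp only [hkdef, hwdef, Pi.add_apply]
        abel
      rw [hv]
      exact Submodule.add_mem_sup hkK hwKinf
    · intro hv
      obtain ⟨k, hk, w, hw, rfl⟩ := Submodule.mem_sup.mp hv
      have hAck : ∀ i, Acal k i = 0 := by
        intro i
        rw [hAcal]
        exact Finset.sum_eq_zero fun m _ => (hK k).mp hk m
      have hw0 : Acal w + β • w = 0 := (hKinfMem w).mp hw
      rw [hK]
      intro i
      have : (Acal (k + w) + β • (k + w)) i =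
          (Acal k i + β • k i) + (Acal w + β • w) i := by
        simp only [map_add, Pi.add_apply, Pi.smul_apply, smul_add]
        abel
      rw [this, hAck i, hw0]
      simp only [Pi.zero_apply, add_zero, zero_add]
      rw [mulVec_smul, (hK k).mp hk i, smul_zero]
  -- ker Abar = map mkQ Kinf
  have hkerSup : LinearMap.ker Abar = Submodule.map K.mkQ (K ⊔ Kinf) := by
    ext x
    obtain ⟨v, rfl⟩ := K.mkQ_surjective x
    constructor
    · intro hx
      rw [LinearMap.mem_ker, hAbar, Submodule.mkQ_apply,
        Submodule.Quotient.mk_eq_zero] at hx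
      exact ⟨v, (hb v).mp hx, rfl⟩
    · rintro ⟨u, hu, huv⟩
      rw [LinearMap.mem_ker, hAbar, Submodule.mkQ_apply, Submodule.Quotient.mk_eq_zero]
      rw [hb]
      have huv' : (Submodule.Quotient.mk u : _ ⧸ K) = Submodule.Quotient.mk v := huv
      have hvu : u - v ∈ K := (Submodule.Quotient.eq K).mp huv'
      have : v = u - (u - v) := by abel
      rw [this]
      exact Submodule.sub_mem _ hu (Submodule.mem_sup_left hvu)
  have hker : LinearMap.ker Abar = Submodule.map K.mkQ Kinf := by
    rw [hkerSup, Submodule.map_sup]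
    have hKbot : Submodule.map K.mkQ K = ⊥ := by
      rw [Submodule.eq_bot_iff]
      rintro x ⟨y, hy, rfl⟩
      simpa [Submodule.Quotient.mk_eq_zero] using hy
    rw [hKbot, bot_sup_eq]
  refine ⟨fun i => ⟨haK i, haKinf i, haSup i⟩, hb, hker, ?_⟩
  -- (c)
  refine ⟨(Submodule.quotEquivOfEq _ _ hkerSup).trans
    (Submodule.quotientQuotientEquivQuotient K (K ⊔ Kinf) le_sup_left), ?_, ?_⟩
  · intro v
    simp only [LinearEquiv.trans_apply, Submodule.mkQ_apply, Submodule.quotEquivOfEq_mk]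
    exact Submodule.quotientQuotientEquivQuotientAux_mk_mk _ _ le_sup_left v
  · intro i C1 hC1 C2 hC2 w
    set Θ := (Submodule.quotEquivOfEq _ _ hkerSup).trans
      (Submodule.quotientQuotientEquivQuotient K (K ⊔ Kinf) le_sup_left)
    have hTheta : ∀ v, Θ ((LinearMap.ker Abar).mkQ (K.mkQ v)) = (K ⊔ Kinf).mkQ v := by
      intro v
      simp only [Θ, LinearEquiv.trans_apply, Submodule.mkQ_apply, Submodule.quotEquivOfEq_mk]
      exact Submodule.quotientQuotientEquivQuotientAux_mk_mk _ _ le_sup_left v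
    obtain ⟨x, rfl⟩ := (LinearMap.ker Abar).mkQ_surjective w
    obtain ⟨v, rfl⟩ := K.mkQ_surjective x
    rw [hC1, hTheta, hTheta, hC2]
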